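/- arXiv:1501.03005 — 3 statements merged into one kernel-verified Lean document; each statement's English description precedes it below -/
import Mathlib

section
/- If f : Ω → ℂ satisfies the Beltrami-type equation f_z̄ = μ f_z + ν conj(f_z) on Ω with measurable coefficients μ, ν, and f is a C¹ diffeomorphism onto f(Ω) with inverse g, then g satisfies g_w̄ = -ν(g)·g_w - μ(g)·conj(g_w) on f(Ω). -/
/-- The Wirtinger derivative `f_z = (f_x - i f_y)/2`. -/
noncomputable def wirtingerZ (f : ℂ → ℂ) (z : ℂ) : ℂ :=
  (fderiv ℝ f z 1 - Complex.I * fderiv ℝ f z Complex.I) / 2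

/-- The Wirtinger derivative `f_z̄ = (f_x + i f_y)/2`. -/
noncomputable def wirtingerZbar (f : ℂ → ℂ) (z : ℂ) : ℂ :=
  (fderiv ℝ f z 1 + Complex.I * fderiv ℝ f z Complex.I) / 2


lemma clm_apply_wirtinger (L : ℂ →L[ℝ] ℂ) (v : ℂ) :
    L v = (L 1 - Complex.I * L Complex.I) / 2 * v
        + (L 1 + Complex.I * L Complex.I) / 2 * (starRingEnd ℂ) v := by
  have hv : v = (v.re : ℝ) • (1 : ℂ) + (v.im : ℝ) • Complex.I := by
    simp [Complex.real_smul, Complex.re_add_im]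
  rw [hv, map_add, map_smul, map_smul]
  simp only [Complex.real_smul, map_add, map_mul, map_one, Complex.conj_I,
    Complex.conj_ofReal, mul_one]
  linear_combination (↑v.im * L Complex.I) * Complex.I_sq

lemma clm_injective (L : ℂ →L[ℝ] ℂ)
    (h : 0 < ‖(L 1 - Complex.I * L Complex.I) / 2‖ ^ 2 -
      ‖(L 1 + Complex.I * L Complex.I) / 2‖ ^ 2) :
    Function.Injective L := by
  set a := (L 1 - Complex.I * L Complex.I) / 2 with ha
  set b := (L 1 + Complex.I * L Complex.I) / 2 with hb
  have key : ∀ v, L v = 0 → v = 0 := by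
    intro v hv
    by_contra hv0
    have h1 : a * v = -(b * (starRingEnd ℂ) v) := by
      have h2 := clm_apply_wirtinger L v
      rw [hv] at h2
      linear_combination -h2
    have h3 : ‖a‖ * ‖v‖ = ‖b‖ * ‖v‖ := by
      have := congrArg (‖·‖) h1
      simpa [norm_mul] using this
    have hvpos : 0 < ‖v‖ := by simpa using hv0
    have : ‖a‖ = ‖b‖ := mul_right_cancel₀ (ne_of_gt hvpos) h3
    rw [this] at h; simp at h
  intro x y hxy
  have h0 : L (x - y) = 0 := by rw [map_sub, hxy, sub_self]
  exact sub_eq_zero.mp (key _ h0)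

lemma image_open' (Ω : Set ℂ) (hΩ : IsOpen Ω) (f : ℂ → ℂ)
    (hf : ContDiffOn ℝ 1 f Ω)
    (hJ : ∀ z ∈ Ω, Function.Injective (fderiv ℝ f z)) :
    IsOpen (f '' Ω) := by
  rw [isOpen_iff_mem_nhds]
  rintro w ⟨z, hz, rfl⟩
  have hca : ContDiffAt ℝ 1 f z := hf.contDiffAt (hΩ.mem_nhds hz)
  have hsd : HasStrictFDerivAt f (fderiv ℝ f z) z := hca.hasStrictFDerivAt one_ne_zero
  have hinj := hJ z hz
  have hbij : Function.Bijective (fderiv ℝ f z).toLinearMap :=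
    ⟨hinj, LinearMap.surjective_of_injective hinj⟩
  let e : ℂ ≃L[ℝ] ℂ :=
    (LinearEquiv.ofBijective (fderiv ℝ f z).toLinearMap hbij).toContinuousLinearEquiv
  have he : (e : ℂ →L[ℝ] ℂ) = fderiv ℝ f z := by ext v; rfl
  have hsd' : HasStrictFDerivAt f (e : ℂ →L[ℝ] ℂ) z := he ▸ hsd
  rw [← hsd'.map_nhds_eq_of_equiv]
  exact Filter.image_mem_map (hΩ.mem_nhds hz)

/-- If `f` solves `f_z̄ = μ f_z + ν conj(f_z)` and is a C¹ diffeomorphism with positive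
Jacobian and inverse `g`, then `g_w̄ = -ν(g) g_w - μ(g) conj(g_w)` on `f(Ω)`. -/
theorem inverse_beltrami_equation
    (Ω : Set ℂ) (hΩ : IsOpen Ω) (f g : ℂ → ℂ) (μ ν : ℂ → ℂ)
    (hf : ContDiffOn ℝ 1 f Ω)
    (hJ : ∀ z ∈ Ω, 0 < ‖wirtingerZ f z‖ ^ 2 -
      ‖wirtingerZbar f z‖ ^ 2)
    (hbel : ∀ z ∈ Ω, wirtingerZbar f z =
      μ z * wirtingerZ f z + ν z * (starRingEnd ℂ) (wirtingerZ f z))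
    (hg : ContDiffOn ℝ 1 g (f '' Ω))
    (hgf : ∀ z ∈ Ω, g (f z) = z)
    (hfg : ∀ w ∈ f '' Ω, f (g w) = w) :
    ∀ w ∈ f '' Ω,
      wirtingerZbar g w =
        -ν (g w) * wirtingerZ g w - μ (g w) * (starRingEnd ℂ) (wirtingerZ g w) := by
  simp only [wirtingerZ, wirtingerZbar] at hJ hbel ⊢
  have hopen : IsOpen (f '' Ω) := image_open' Ω hΩ f hf (fun z hz => clm_injective _ (hJ z hz))
  rintro w ⟨z, hz, rfl⟩
  have hw : f z ∈ f '' Ω := ⟨z, hz, rfl⟩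
  have hgz : g (f z) = z := hgf z hz
  have hfd : HasFDerivAt f (fderiv ℝ f z) z :=
    ((hf.contDiffAt (hΩ.mem_nhds hz)).differentiableAt one_ne_zero).hasFDerivAt
  have hgd : HasFDerivAt g (fderiv ℝ g (f z)) (f z) :=
    ((hg.contDiffAt (hopen.mem_nhds hw)).differentiableAt one_ne_zero).hasFDerivAt
  have hcomp : HasFDerivAt (g ∘ f) ((fderiv ℝ g (f z)).comp (fderiv ℝ f z)) z :=
    hgd.comp z hfd
  have hid : HasFDerivAt (g ∘ f) (ContinuousLinearMap.id ℝ ℂ) z := by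
    have hev : (g ∘ f) =ᶠ[nhds z] id := by
      filter_upwards [hΩ.mem_nhds hz] with x hx using hgf x hx
    exact (hasFDerivAt_id z).congr_of_eventuallyEq hev
  have heq : (fderiv ℝ g (f z)).comp (fderiv ℝ f z) = ContinuousLinearMap.id ℝ ℂ :=
    hcomp.unique hid
  set L := fderiv ℝ f z with hL
  set M := fderiv ℝ g (f z) with hM
  set a := (L 1 - Complex.I * L Complex.I) / 2 with ha
  set b := (L 1 + Complex.I * L Complex.I) / 2 with hb
  set A := (M 1 - Complex.I * M Complex.I) / 2 with hA'
  set B := (M 1 + Complex.I * M Complex.I) / 2 with hB'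
  have e1 : M (L 1) = 1 := by
    rw [← ContinuousLinearMap.comp_apply, heq]; rfl
  have eI : M (L Complex.I) = Complex.I := by
    rw [← ContinuousLinearMap.comp_apply, heq]; rfl
  have hL1 : L 1 = a + b := by rw [ha, hb]; ring
  have hLI : L Complex.I = (a - b) * Complex.I := by
    rw [ha, hb]
    have h : (L 1 - Complex.I * L Complex.I) / 2 - (L 1 + Complex.I * L Complex.I) / 2
        = -Complex.I * L Complex.I := by ring
    rw [h]
    linear_combination (L Complex.I) * Complex.I_sq
  have E1 : A * (a + b) + B * (starRingEnd ℂ) (a + b) = 1 := by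
    rw [← clm_apply_wirtinger M (a + b), ← hL1, e1]
  have EI : A * ((a - b) * Complex.I) + B * (starRingEnd ℂ) ((a - b) * Complex.I)
      = Complex.I := by
    rw [← clm_apply_wirtinger M ((a - b) * Complex.I), ← hLI, eI]
  simp only [map_add, map_mul, map_sub, Complex.conj_I] at E1 EI
  have EI' : A * (a - b) - B * ((starRingEnd ℂ) a - (starRingEnd ℂ) b) = 1 := by
    linear_combination (-Complex.I) * EI +
      (A * (a - b) - B * ((starRingEnd ℂ) a - (starRingEnd ℂ) b) - 1) * Complex.I_sq
  have S1 : A * a + B * (starRingEnd ℂ) b = 1 := by linear_combination (E1 + EI') / 2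
  have S2 : A * b + B * (starRingEnd ℂ) a = 0 := by linear_combination (E1 - EI') / 2
  set J : ℝ := ‖a‖ ^ 2 - ‖b‖ ^ 2 with hJdef
  have hJpos : 0 < J := hJ z hz
  have hJne : (J : ℂ) ≠ 0 := by
    simpa using (Complex.ofReal_ne_zero.mpr (ne_of_gt hJpos))
  have hJc : a * (starRingEnd ℂ) a - b * (starRingEnd ℂ) b = (J : ℂ) := by
    simp only [Complex.mul_conj, hJdef]
    push_cast [← Complex.sq_norm]
    ring
  have hAJ : A * (J : ℂ) = (starRingEnd ℂ) a := by
    linear_combination (starRingEnd ℂ) a * S1 - (starRingEnd ℂ) b * S2 - A * hJc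
  have hBJ : B * (J : ℂ) = -b := by
    linear_combination a * S2 - b * S1 - B * hJc
  have hcA : (starRingEnd ℂ) A * (J : ℂ) = a := by
    have := congrArg (starRingEnd ℂ) hAJ
    simpa [map_mul, Complex.conj_ofReal] using this
  have hbelz : b = μ z * a + ν z * (starRingEnd ℂ) a := hbel z hz
  rw [hgz]
  refine mul_right_cancel₀ hJne ?_
  linear_combination hBJ + ν z * hAJ + μ z * hcA - hbelz
end

section
/- Let Γ ⊂ ℝ² be a closed curve parametrized by arclength by a C² T-periodic map Φ with |Φ'| ≡ 1 and 0 < κ ≤ Φ''·JᵀΦ' ≤ K, where J is counterclockwise rotation by 90°. Then for every unit vector ξ, writing φ_ξ = Φ·ξ, the total variation of φ_ξ between its minimum and maximum satisfies M_ξ - m_ξ ≥ 1/K. -/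
open Set

private lemma c2_facts (Φ : ℝ → ℝ) (h : ContDiff ℝ 2 Φ) :
    Differentiable ℝ Φ ∧ Differentiable ℝ (deriv Φ) ∧ Continuous (deriv (deriv Φ)) := by
  have h2 : ContDiff ℝ (1+1 : ℕ) Φ := by exact_mod_cast h
  rw [show ((1+1 : ℕ) : WithTop ℕ∞) = (1:WithTop ℕ∞) + 1 by norm_cast] at h2
  have h1 := contDiff_succ_iff_deriv.mp h2
  have h0 := contDiff_one_iff_deriv.mp h1.2.2
  exact ⟨h1.1, h0.1, h0.2⟩

private lemma periodic_deriv' (Φ : ℝ → ℝ) (T : ℝ) (h : Function.Periodic Φ T) :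
    Function.Periodic (deriv Φ) T := by
  intro t
  have : (fun x => Φ (x + T)) = Φ := funext fun x => h x
  calc deriv Φ (t + T) = deriv (fun x => Φ (x + T)) t := (deriv_comp_add_const Φ T t).symm
    _ = deriv Φ t := by rw [this]

/-- A quantitatively convex closed curve (arclength parametrized, with curvature pinched
between `κ` and `K`) has width at least `1/K` in every direction: for every unit vector
`ξ`, the oscillation of `φ_ξ = Φ·ξ` over a period is at least `1/K`. -/
theorem quantitative_convexity_width
    (T κ K : ℝ) (hT : 0 < T) (hκ : 0 < κ) (hκK : κ ≤ K)
    (Φ₁ Φ₂ : ℝ → ℝ)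
    (hC2 : ContDiff ℝ 2 Φ₁ ∧ ContDiff ℝ 2 Φ₂)
    (hper : Function.Periodic Φ₁ T ∧ Function.Periodic Φ₂ T)
    (harc : ∀ t : ℝ, (deriv Φ₁ t) ^ 2 + (deriv Φ₂ t) ^ 2 = 1)
    (hcurv : ∀ t : ℝ,
      κ ≤ deriv (deriv Φ₁) t * deriv Φ₂ t - deriv (deriv Φ₂) t * deriv Φ₁ t ∧
      deriv (deriv Φ₁) t * deriv Φ₂ t - deriv (deriv Φ₂) t * deriv Φ₁ t ≤ K) :
    ∀ ξ₁ ξ₂ : ℝ, ξ₁ ^ 2 + ξ₂ ^ 2 = 1 →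
      1 / K ≤
        sSup ((fun t => Φ₁ t * ξ₁ + Φ₂ t * ξ₂) '' Icc 0 T) -
          sInf ((fun t => Φ₁ t * ξ₁ + Φ₂ t * ξ₂) '' Icc 0 T) := by
  intro ξ₁ ξ₂ hξ
  have hK : 0 < K := lt_of_lt_of_le hκ hκK
  obtain ⟨hd1, hdd1, hcdd1⟩ := c2_facts Φ₁ hC2.1
  obtain ⟨hd2, hdd2, hcdd2⟩ := c2_facts Φ₂ hC2.2
  have hcd1 : Continuous (deriv Φ₁) := hdd1.continuous
  have hcd2 : Continuous (deriv Φ₂) := hdd2.continuous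
  set φ : ℝ → ℝ := fun t => Φ₁ t * ξ₁ + Φ₂ t * ξ₂ with hφdef
  set f : ℝ → ℝ := fun t => deriv Φ₁ t * ξ₁ + deriv Φ₂ t * ξ₂ with hfdef
  set g : ℝ → ℝ := fun t => deriv Φ₂ t * ξ₁ - deriv Φ₁ t * ξ₂ with hgdef
  set k : ℝ → ℝ := fun t =>
    deriv (deriv Φ₁) t * deriv Φ₂ t - deriv (deriv Φ₂) t * deriv Φ₁ t with hkdef
  -- continuity
  have hφc : Continuous φ := ((hd1.continuous.mul continuous_const).add
    (hd2.continuous.mul continuous_const))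
  have hfc : Continuous f := ((hcd1.mul continuous_const).add (hcd2.mul continuous_const))
  have hgc : Continuous g := ((hcd2.mul continuous_const).sub (hcd1.mul continuous_const))
  have hkc : Continuous k := ((hcdd1.mul hcd2).sub (hcdd2.mul hcd1))
  -- derivatives
  have hφ' : ∀ t, HasDerivAt φ (f t) t := fun t =>
    (((hd1 t).hasDerivAt.mul_const ξ₁).add ((hd2 t).hasDerivAt.mul_const ξ₂))
  -- orthogonality: Φ'·Φ'' = 0
  have horth : ∀ t, deriv Φ₁ t * deriv (deriv Φ₁) t + deriv Φ₂ t * deriv (deriv Φ₂) t = 0 := by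
    intro t
    have h1 : HasDerivAt (fun s => (deriv Φ₁ s) ^ 2 + (deriv Φ₂ s) ^ 2)
        (2 * deriv Φ₁ t * deriv (deriv Φ₁) t + 2 * deriv Φ₂ t * deriv (deriv Φ₂) t) t := by
      have a1 := ((hdd1 t).hasDerivAt).pow 2
      have a2 := ((hdd2 t).hasDerivAt).pow 2
      have := a1.add a2
      have h' : HasDerivAt (deriv Φ₁ ^ 2 + deriv Φ₂ ^ 2)
          (2 * deriv Φ₁ t * deriv (deriv Φ₁) t + 2 * deriv Φ₂ t * deriv (deriv Φ₂) t) t := by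
        simpa [mul_comm, mul_assoc, mul_left_comm, pow_one] using this
      exact h'
    have h2 : (fun s => (deriv Φ₁ s) ^ 2 + (deriv Φ₂ s) ^ 2) = fun _ => (1:ℝ) :=
      funext fun s => harc s
    rw [h2] at h1
    have := h1.unique (hasDerivAt_const t 1)
    nlinarith [this]
  have hf' : ∀ t, HasDerivAt f (k t * g t) t := by
    intro t
    have h := (((hdd1 t).hasDerivAt.mul_const ξ₁).add ((hdd2 t).hasDerivAt.mul_const ξ₂))
    have he : deriv (deriv Φ₁) t * ξ₁ + deriv (deriv Φ₂) t * ξ₂ = k t * g t := by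
      have h0 := horth t
      have h1 := harc t
      show _ = (deriv (deriv Φ₁) t * deriv Φ₂ t - deriv (deriv Φ₂) t * deriv Φ₁ t) *
        (deriv Φ₂ t * ξ₁ - deriv Φ₁ t * ξ₂)
      linear_combination (deriv Φ₁ t * ξ₁ + deriv Φ₂ t * ξ₂) * h0 -
        (deriv (deriv Φ₁) t * ξ₁ + deriv (deriv Φ₂) t * ξ₂) * h1
    rwa [he] at h
  have hg' : ∀ t, HasDerivAt g (-(k t * f t)) t := by
    intro t
    have h := (((hdd2 t).hasDerivAt.mul_const ξ₁).sub ((hdd1 t).hasDerivAt.mul_const ξ₂))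
    have he : deriv (deriv Φ₂) t * ξ₁ - deriv (deriv Φ₁) t * ξ₂ = -(k t * f t) := by
      have h0 := horth t
      have h1 := harc t
      show _ = -((deriv (deriv Φ₁) t * deriv Φ₂ t - deriv (deriv Φ₂) t * deriv Φ₁ t) *
        (deriv Φ₁ t * ξ₁ + deriv Φ₂ t * ξ₂))
      linear_combination (deriv Φ₂ t * ξ₁ - deriv Φ₁ t * ξ₂) * h0 -
        (deriv (deriv Φ₂) t * ξ₁ - deriv (deriv Φ₁) t * ξ₂) * h1
    rwa [he] at h
  have hfg : ∀ t, f t ^ 2 + g t ^ 2 = 1 := by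
    intro t
    have h1 := harc t
    simp only [hfdef, hgdef]
    nlinarith [h1, hξ]
  -- periodicity
  have hφper : Function.Periodic φ T := fun t => by simp [hφdef, hper.1 t, hper.2 t]
  have hfper : Function.Periodic f T := fun t => by
    simp [hfdef, periodic_deriv' Φ₁ T hper.1 t, periodic_deriv' Φ₂ T hper.2 t]
  -- min attained
  obtain ⟨t₀, ht₀mem, ht₀min⟩ := isCompact_Icc.exists_isMinOn (α := ℝ) (s := Icc (0:ℝ) T)
    (nonempty_Icc.mpr hT.le) hφc.continuousOn
  have hglob : ∀ t, φ t₀ ≤ φ t := by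
    intro t
    obtain ⟨y, hy, hEq⟩ := hφper.exists_mem_Ico₀ hT t
    rw [hEq]
    exact ht₀min (Ico_subset_Icc_self hy)
  have hft₀ : f t₀ = 0 := by
    have hlm : IsLocalMin φ t₀ := Filter.Eventually.of_forall hglob
    have := hlm.deriv_eq_zero
    rwa [(hφ' t₀).deriv] at this
  have hgt₀sq : g t₀ ^ 2 = 1 := by have := hfg t₀; nlinarith [hft₀]
  -- rule out g t₀ = -1
  have hgt₀ : g t₀ = 1 := by
    have hcases : (g t₀ - 1) * (g t₀ + 1) = 0 := by nlinarith [hgt₀sq]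
    rcases mul_eq_zero.mp hcases with h | h
    · linarith
    · exfalso
      have hgneg : g t₀ = -1 := by linarith
      -- then f' (t₀) < 0, so φ strictly decreases right after its minimum: contradiction
      have hkpos : 0 < k t₀ := lt_of_lt_of_le hκ (hcurv t₀).1
      have hlt : k t₀ * g t₀ < 0 := by rw [hgneg]; nlinarith
      have hco : ContinuousAt (fun t => k t * g t) t₀ := (hkc.mul hgc).continuousAt
      have hev : ∀ᶠ t in nhds t₀, k t * g t < 0 :=
        hco.eventually_mem (isOpen_Iio.mem_nhds hlt)
      obtain ⟨ε, hε, hball⟩ := Metric.eventually_nhds_iff.mp hev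
      set δ := ε / 2 with hδdef
      have hδ : 0 < δ := by positivity
      have hfanti : StrictAntiOn f (Icc t₀ (t₀ + δ)) := by
        apply strictAntiOn_of_deriv_neg (convex_Icc _ _) hfc.continuousOn
        intro x hx
        rw [interior_Icc] at hx
        rw [(hf' x).deriv]
        apply hball
        rw [Real.dist_eq, abs_lt]
        constructor <;> [linarith [hx.1]; linarith [hx.2, hε]]
      have hfneg : ∀ x ∈ Ioo t₀ (t₀ + δ), f x < 0 := by
        intro x hx
        have := hfanti (left_mem_Icc.mpr (by linarith)) ⟨hx.1.le, hx.2.le⟩ hx.1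
        rw [hft₀] at this
        exact this
      have hφanti : StrictAntiOn φ (Icc t₀ (t₀ + δ)) := by
        apply strictAntiOn_of_deriv_neg (convex_Icc _ _) hφc.continuousOn
        intro x hx
        rw [interior_Icc] at hx
        rw [(hφ' x).deriv]
        exact hfneg x hx
      have : φ (t₀ + δ) < φ t₀ :=
        hφanti (left_mem_Icc.mpr (by linarith)) (right_mem_Icc.mpr (by linarith))
          (by linarith)
      exact absurd (hglob (t₀ + δ)) (not_le.mpr this)
  -- the zero set of g to the right of t₀
  set S : Set ℝ := Icc t₀ (t₀ + T) ∩ g ⁻¹' {0} with hSdef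
  have hSclosed : IsClosed S := isClosed_Icc.inter (isClosed_singleton.preimage hgc)
  have hSbdd : BddBelow S := bddBelow_Icc.mono inter_subset_left
  have hSne : S.Nonempty := by
    by_contra hS
    rw [not_nonempty_iff_eq_empty] at hS
    have hgne : ∀ t ∈ Icc t₀ (t₀ + T), g t ≠ 0 := by
      intro t ht h0
      have : t ∈ S := ⟨ht, h0⟩
      simp [hS] at this
    have hgpos : ∀ t ∈ Icc t₀ (t₀ + T), 0 < g t := by
      intro t ht
      rcases lt_or_gt_of_ne (hgne t ht).symm with h | h
      · exact h
      · exfalso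
        have hIVT := intermediate_value_Icc' (a := t₀) (b := t) ht.1 hgc.continuousOn
        have h0mem : (0:ℝ) ∈ Icc (g t) (g t₀) := ⟨h.le, by rw [hgt₀]; norm_num⟩
        obtain ⟨s, hs, hgs⟩ := hIVT h0mem
        exact hgne s ⟨hs.1, le_trans hs.2 ht.2⟩ hgs
    have hsm : StrictMonoOn f (Icc t₀ (t₀ + T)) := by
      apply strictMonoOn_of_deriv_pos (convex_Icc _ _) hfc.continuousOn
      intro x hx
      rw [interior_Icc] at hx
      rw [(hf' x).deriv]
      exact mul_pos (lt_of_lt_of_le hκ (hcurv x).1)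
        (hgpos x ⟨hx.1.le, hx.2.le⟩)
    have h1 : f t₀ < f (t₀ + T) :=
      hsm (left_mem_Icc.mpr (by linarith)) (right_mem_Icc.mpr (by linarith)) (by linarith)
    rw [hfper t₀] at h1
    exact lt_irrefl _ h1
  set b := sInf S with hbdef
  have hbS : b ∈ S := hSclosed.csInf_mem hSne hSbdd
  have hgb : g b = 0 := hbS.2
  have hbIcc : b ∈ Icc t₀ (t₀ + T) := hbS.1
  have ht₀b : t₀ < b := by
    rcases lt_or_eq_of_le hbIcc.1 with h | h
    · exact h
    · exfalso; rw [← h, hgt₀] at hgb; norm_num at hgb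
  have hblow : ∀ s ∈ S, b ≤ s := fun s hs => csInf_le hSbdd hs
  -- g is nonnegative on [t₀, b]
  have hgnn : ∀ t ∈ Icc t₀ b, 0 ≤ g t := by
    intro t ht
    rcases eq_or_lt_of_le ht.2 with h | h
    · rw [h, hgb]
    · by_contra hneg
      push_neg at hneg
      have htmem : t ∈ Icc t₀ (t₀ + T) := ⟨ht.1, le_trans h.le hbIcc.2⟩
      rcases eq_or_lt_of_le hneg.le with h0 | h0
      · have : t ∈ S := ⟨htmem, h0⟩
        exact absurd (hblow t this) (not_le.mpr h)
      · have hIVT := intermediate_value_Icc' (a := t₀) (b := t) ht.1 hgc.continuousOn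
        have h0mem : (0:ℝ) ∈ Icc (g t) (g t₀) := ⟨h0.le, by rw [hgt₀]; norm_num⟩
        obtain ⟨s, hs, hgs⟩ := hIVT h0mem
        have : s ∈ S := ⟨⟨hs.1, le_trans hs.2 htmem.2⟩, hgs⟩
        exact absurd (hblow s this) (not_le.mpr (lt_of_le_of_lt hs.2 h))
  -- f is nonnegative on [t₀, b]
  have hfmono : MonotoneOn f (Icc t₀ b) := by
    apply monotoneOn_of_deriv_nonneg (convex_Icc _ _) hfc.continuousOn
    · intro x hx
      exact (hf' x).differentiableAt.differentiableWithinAt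
    · intro x hx
      rw [interior_Icc] at hx
      rw [(hf' x).deriv]
      exact mul_nonneg (le_of_lt (lt_of_lt_of_le hκ (hcurv x).1))
        (hgnn x ⟨hx.1.le, hx.2.le⟩)
  have hfnn : ∀ t ∈ Icc t₀ b, 0 ≤ f t := by
    intro t ht
    have := hfmono (left_mem_Icc.mpr ht₀b.le) ht ht.1
    rwa [hft₀] at this
  -- integral computations
  have hI1 : ∫ t in t₀..b, -(k t * f t) = g b - g t₀ :=
    intervalIntegral.integral_eq_sub_of_hasDerivAt (fun x _ => hg' x)
      (((hkc.mul hfc).neg).intervalIntegrable _ _)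
  have hI1' : ∫ t in t₀..b, k t * f t = 1 := by
    rw [intervalIntegral.integral_neg] at hI1
    rw [hgb, hgt₀] at hI1
    linarith
  have hI2 : ∫ t in t₀..b, f t = φ b - φ t₀ :=
    intervalIntegral.integral_eq_sub_of_hasDerivAt (fun x _ => hφ' x)
      (hfc.intervalIntegrable _ _)
  have hImono : ∫ t in t₀..b, k t * f t ≤ ∫ t in t₀..b, K * f t := by
    apply intervalIntegral.integral_mono_on ht₀b.le
      ((hkc.mul hfc).intervalIntegrable _ _)
      ((continuous_const.mul hfc).intervalIntegrable _ _)
    intro x hx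
    exact mul_le_mul_of_nonneg_right (hcurv x).2 (hfnn x hx)
  have hIK : ∫ t in t₀..b, K * f t = K * (φ b - φ t₀) := by
    rw [intervalIntegral.integral_const_mul, hI2]
  have hkey : 1 ≤ K * (φ b - φ t₀) := by rw [← hIK, ← hI1']; exact hImono
  -- conclusion
  have hbddA : BddAbove (φ '' Icc 0 T) := isCompact_Icc.bddAbove_image hφc.continuousOn
  have hbddB : BddBelow (φ '' Icc 0 T) := isCompact_Icc.bddBelow_image hφc.continuousOn
  obtain ⟨y, hy, hEq⟩ := hφper.exists_mem_Ico₀ hT b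
  have hM : φ b ≤ sSup (φ '' Icc 0 T) := by
    rw [hEq]
    exact le_csSup hbddA ⟨y, Ico_subset_Icc_self hy, rfl⟩
  have hm : sInf (φ '' Icc 0 T) ≤ φ t₀ := csInf_le hbddB ⟨t₀, ht₀mem, rfl⟩
  have h1K : 1 / K ≤ φ b - φ t₀ := by
    rw [div_le_iff₀ hK]
    linarith
  have h2 : φ b - φ t₀ ≤ sSup (φ '' Icc 0 T) - sInf (φ '' Icc 0 T) := sub_le_sub hM hm
  exact le_trans h1K h2
end

section
/- With U(x) = (x₁, x₂, -x₁x₂ + φ(x₃)) where φ(x₃) = a₀(1-a₀²)x₃² for x₃ > 0 and φ = 0 for x₃ ≤ 0 (a₀ ∈ (0,1)), the map U is C^{1,1} (i.e., C¹ with Lipschitz derivative) on ℝ³, and det DU(x) = 2a₀(1-a₀²)x₃ > 0 for x₃ > 0 while det DU(x) = 0 for x₃ ≤ 0. In particular det DU vanishes on an open set without vanishing identically. -/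
/-- The profile `φ`. -/
noncomputable def jkPhi (a₀ : ℝ) (t : ℝ) : ℝ :=
  if 0 < t then a₀ * (1 - a₀ ^ 2) * t ^ 2 else 0

/-- The mapping `U(x) = (x₁, x₂, -x₁x₂ + φ(x₃))`. -/
noncomputable def jkU (a₀ : ℝ) (p : ℝ × ℝ × ℝ) : ℝ × ℝ × ℝ :=
  (p.1, p.2.1, -p.1 * p.2.1 + jkPhi a₀ p.2.2)

open ContinuousLinearMap

noncomputable def jkL1 : (ℝ × ℝ × ℝ) →L[ℝ] ℝ := fst ℝ ℝ (ℝ × ℝ)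
noncomputable def jkL2 : (ℝ × ℝ × ℝ) →L[ℝ] ℝ := (fst ℝ ℝ ℝ).comp (snd ℝ ℝ (ℝ × ℝ))
noncomputable def jkL3 : (ℝ × ℝ × ℝ) →L[ℝ] ℝ := (snd ℝ ℝ ℝ).comp (snd ℝ ℝ (ℝ × ℝ))

noncomputable def jkD (a₀ : ℝ) (p : ℝ × ℝ × ℝ) : (ℝ × ℝ × ℝ) →L[ℝ] (ℝ × ℝ × ℝ) :=
  jkL1.prod (jkL2.prod (-(p.1 • jkL2 + p.2.1 • jkL1) +
    (a₀ * (1 - a₀ ^ 2) * (2 * max p.2.2 0)) • jkL3))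

lemma sq_max_hasDerivAt (t : ℝ) : HasDerivAt (fun s : ℝ => (max s 0) ^ 2) (2 * max t 0) t := by
  rcases lt_trichotomy t 0 with ht | ht | ht
  · have h0 : (fun s : ℝ => (max s 0) ^ 2) =ᶠ[nhds t] fun _ => (0 : ℝ) := by
      filter_upwards [eventually_lt_nhds ht] with s hs
      simp [max_eq_right hs.le]
    have : HasDerivAt (fun _ : ℝ => (0 : ℝ)) 0 t := hasDerivAt_const t 0
    have := this.congr_of_eventuallyEq h0
    simpa [max_eq_right ht.le] using this
  · subst ht
    rw [hasDerivAt_iff_isLittleO]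
    rw [Asymptotics.isLittleO_iff]
    intro c hc
    filter_upwards [Metric.ball_mem_nhds (0:ℝ) hc] with s hs
    have hs' : |s| < c := by simpa [Real.dist_eq] using hs
    have h1 : |max s 0| ≤ |s| := by
      rcases le_or_gt s 0 with h | h
      · simp [max_eq_right h]
      · simp [max_eq_left h.le]
    have : ‖(max s 0) ^ 2‖ ≤ |s| * |s| := by
      rw [Real.norm_eq_abs, abs_pow, sq]
      exact mul_le_mul h1 h1 (abs_nonneg _) (abs_nonneg _)
    calc ‖(max s 0) ^ 2 - (max (0:ℝ) 0) ^ 2 - (s - 0) • (2 * (max (0:ℝ) 0))‖ = ‖(max s 0) ^ 2‖ := by simp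
    _ ≤ |s| * |s| := this
    _ ≤ c * |s| := by nlinarith [abs_nonneg s]
    _ = c * ‖s - 0‖ := by rw [Real.norm_eq_abs, sub_zero]
  · have h0 : (fun s : ℝ => (max s 0) ^ 2) =ᶠ[nhds t] fun s => s ^ 2 := by
      filter_upwards [eventually_gt_nhds ht] with s hs
      simp [max_eq_left hs.le]
    have : HasDerivAt (fun s : ℝ => s ^ 2) (2 * t) t := by
      simpa using hasDerivAt_pow 2 t
    have := this.congr_of_eventuallyEq h0
    simpa [max_eq_left ht.le] using this

lemma jkPhi_eq (a₀ : ℝ) : jkPhi a₀ = fun t => a₀ * (1 - a₀ ^ 2) * (max t 0) ^ 2 := by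
  funext t
  unfold jkPhi
  rcases lt_or_ge 0 t with ht | ht
  · rw [if_pos ht, max_eq_left ht.le]
  · rw [if_neg (not_lt.2 ht), max_eq_right ht]
    simp

lemma hasDerivAt_jkPhi (a₀ t : ℝ) :
    HasDerivAt (jkPhi a₀) (a₀ * (1 - a₀ ^ 2) * (2 * max t 0)) t := by
  rw [jkPhi_eq]
  exact (sq_max_hasDerivAt t).const_mul _

lemma contDiff_jkPhi (a₀ : ℝ) : ContDiff ℝ 1 (jkPhi a₀) := by
  rw [contDiff_one_iff_deriv]
  constructor
  · exact fun t => (hasDerivAt_jkPhi a₀ t).differentiableAt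
  · have : deriv (jkPhi a₀) = fun t => a₀ * (1 - a₀ ^ 2) * (2 * max t 0) := by
      funext t; exact (hasDerivAt_jkPhi a₀ t).deriv
    rw [this]
    exact continuous_const.mul (continuous_const.mul ((continuous_id.max continuous_const)))

lemma hasFDerivAt_jkU (a₀ : ℝ) (p : ℝ × ℝ × ℝ) : HasFDerivAt (jkU a₀) (jkD a₀ p) p := by
  have h1 : HasFDerivAt (fun p : ℝ × ℝ × ℝ => p.1) jkL1 p := hasFDerivAt_fst
  have h2 : HasFDerivAt (fun p : ℝ × ℝ × ℝ => p.2.1) jkL2 p :=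
    hasFDerivAt_fst.comp p hasFDerivAt_snd
  have h3 : HasFDerivAt (fun p : ℝ × ℝ × ℝ => p.2.2) jkL3 p :=
    hasFDerivAt_snd.comp p hasFDerivAt_snd
  have hmul : HasFDerivAt (fun p : ℝ × ℝ × ℝ => p.1 * p.2.1)
      (p.1 • jkL2 + p.2.1 • jkL1) p := h1.mul h2
  have hphi : HasFDerivAt (fun p : ℝ × ℝ × ℝ => jkPhi a₀ p.2.2)
      ((a₀ * (1 - a₀ ^ 2) * (2 * max p.2.2 0)) • jkL3) p := by
    have hd := (hasDerivAt_jkPhi a₀ p.2.2).hasFDerivAt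
    have := hd.comp p h3
    refine this.congr_fderiv (ContinuousLinearMap.ext fun v => ?_)
    simp [jkL3, ContinuousLinearMap.smulRight_apply, ContinuousLinearMap.comp_apply,
        ContinuousLinearMap.smul_apply, ContinuousLinearMap.toSpanSingleton_apply, mul_comm]
  have hthird : HasFDerivAt (fun p : ℝ × ℝ × ℝ => -p.1 * p.2.1 + jkPhi a₀ p.2.2)
      (-(p.1 • jkL2 + p.2.1 • jkL1) +
        (a₀ * (1 - a₀ ^ 2) * (2 * max p.2.2 0)) • jkL3) p := by
    have := hmul.neg.add hphi
    have heq : (fun p : ℝ × ℝ × ℝ => -p.1 * p.2.1 + jkPhi a₀ p.2.2) =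
        fun x : ℝ × ℝ × ℝ => -(x.1 * x.2.1) + jkPhi a₀ x.2.2 := by
      funext x; ring
    rw [heq]
    exact this
  exact HasFDerivAt.prodMk h1 (HasFDerivAt.prodMk h2 hthird)

lemma fderiv_jkU (a₀ : ℝ) : fderiv ℝ (jkU a₀) = jkD a₀ :=
  funext fun p => (hasFDerivAt_jkU a₀ p).fderiv

noncomputable def tripleEquiv : (ℝ × ℝ × ℝ) ≃ₗ[ℝ] (Fin 3 → ℝ) where
  toFun p := ![p.1, p.2.1, p.2.2]
  invFun f := (f 0, f 1, f 2)
  map_add' p q := by funext i; fin_cases i <;> simp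
  map_smul' c p := by funext i; fin_cases i <;> simp
  left_inv p := by simp
  right_inv f := by funext i; fin_cases i <;> simp

lemma det_jkD (a₀ : ℝ) (p : ℝ × ℝ × ℝ) :
    LinearMap.det (jkD a₀ p).toLinearMap = a₀ * (1 - a₀ ^ 2) * (2 * max p.2.2 0) := by
  have h := LinearMap.det_conj (jkD a₀ p).toLinearMap tripleEquiv
  rw [← h, ← LinearMap.det_toMatrix']
  rw [Matrix.det_fin_three]
  simp [LinearMap.toMatrix'_apply, tripleEquiv, jkD, jkL1, jkL2, jkL3, Pi.single_apply]

lemma lip_prod_right {F G : Type*} [NormedAddCommGroup F] [NormedSpace ℝ F]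
    [NormedAddCommGroup G] [NormedSpace ℝ G] (f₀ : (ℝ × ℝ × ℝ) →L[ℝ] F) :
    LipschitzWith 1 (fun X : (ℝ × ℝ × ℝ) →L[ℝ] G => f₀.prod X) := by
  apply LipschitzWith.of_dist_le_mul
  intro X Y
  rw [dist_eq_norm, dist_eq_norm]
  rw [NNReal.coe_one, one_mul]
  refine ContinuousLinearMap.opNorm_le_bound _ (norm_nonneg _) fun v => ?_
  have h : (f₀.prod X - f₀.prod Y) v = ((0 : F), (X - Y) v) := by simp
  rw [h]
  calc ‖((0 : F), (X - Y) v)‖ = ‖(X - Y) v‖ := by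
        simp [Prod.norm_def]
  _ ≤ ‖X - Y‖ * ‖v‖ := ContinuousLinearMap.le_opNorm _ _

noncomputable def jkDalt (a₀ : ℝ) (p : ℝ × ℝ × ℝ) : (ℝ × ℝ × ℝ) →L[ℝ] (ℝ × ℝ × ℝ) :=
  jkL1.prod (jkL2.prod (p.1 • (-jkL2) + p.2.1 • (-jkL1) +
    (max p.2.2 0) • ((2 * (a₀ * (1 - a₀ ^ 2))) • jkL3)))

lemma jkD_eq_alt (a₀ : ℝ) : jkD a₀ = jkDalt a₀ := by
  funext p
  ext v <;> simp [jkD, jkDalt, jkL1, jkL2, jkL3] <;> ring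

lemma lipschitz_jkDalt (a₀ : ℝ) : ∃ L : NNReal, LipschitzWith L (jkDalt a₀) := by
  have hA : LipschitzWith (‖(ContinuousLinearMap.id ℝ ℝ).smulRight (-jkL2)‖₊ * 1)
      (fun p : ℝ × ℝ × ℝ => p.1 • (-jkL2)) :=
    ((ContinuousLinearMap.id ℝ ℝ).smulRight (-jkL2)).lipschitz.comp LipschitzWith.prod_fst
  have hB : LipschitzWith (‖(ContinuousLinearMap.id ℝ ℝ).smulRight (-jkL1)‖₊ * (1 * 1))
      (fun p : ℝ × ℝ × ℝ => p.2.1 • (-jkL1)) :=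
    ((ContinuousLinearMap.id ℝ ℝ).smulRight (-jkL1)).lipschitz.comp
      (LipschitzWith.prod_fst.comp LipschitzWith.prod_snd)
  have hmax : LipschitzWith ((1 : NNReal) * (1 * 1)) (fun p : ℝ × ℝ × ℝ => max p.2.2 0) :=
    ((LipschitzWith.id (α := ℝ)).max_const 0).comp (LipschitzWith.prod_snd.comp LipschitzWith.prod_snd)
  have hC : LipschitzWith
      (‖(ContinuousLinearMap.id ℝ ℝ).smulRight ((2 * (a₀ * (1 - a₀ ^ 2))) • jkL3)‖₊ * (1 * (1 * 1)))
      (fun p : ℝ × ℝ × ℝ => (max p.2.2 0) • ((2 * (a₀ * (1 - a₀ ^ 2))) • jkL3)) :=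
    ((ContinuousLinearMap.id ℝ ℝ).smulRight ((2 * (a₀ * (1 - a₀ ^ 2))) • jkL3)).lipschitz.comp hmax
  have hG := (hA.add hB).add hC
  refine ⟨_, ((lip_prod_right (G := ℝ × ℝ) jkL1).comp
    ((lip_prod_right (G := ℝ) jkL2).comp hG))⟩

/-- `U` is `C^{1,1}` and its Jacobian determinant equals `2a₀(1-a₀²)x₃ > 0` for `x₃ > 0`
and vanishes for `x₃ ≤ 0`: the Jacobian determinant vanishes on an open set without
vanishing identically. -/
theorem jin_kazdan_jacobian (a₀ : ℝ) (ha₀ : 0 < a₀) (ha₁ : a₀ < 1) :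
    ContDiff ℝ 1 (jkU a₀) ∧
    (∃ L : NNReal, LipschitzWith L (fun p => fderiv ℝ (jkU a₀) p)) ∧
    (∀ p : ℝ × ℝ × ℝ, 0 < p.2.2 →
      LinearMap.det ((fderiv ℝ (jkU a₀) p).toLinearMap) = 2 * a₀ * (1 - a₀ ^ 2) * p.2.2 ∧
      0 < LinearMap.det ((fderiv ℝ (jkU a₀) p).toLinearMap)) ∧
    (∀ p : ℝ × ℝ × ℝ, p.2.2 ≤ 0 →
      LinearMap.det ((fderiv ℝ (jkU a₀) p).toLinearMap) = 0) := by
  have ha2 : 0 < 1 - a₀ ^ 2 := by nlinarith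
  refine ⟨?_, ?_, ?_, ?_⟩
  · exact ContDiff.prodMk contDiff_fst (ContDiff.prodMk (contDiff_fst.comp contDiff_snd)
      ((contDiff_fst.neg.mul (contDiff_fst.comp contDiff_snd)).add
        ((contDiff_jkPhi a₀).comp (contDiff_snd.comp contDiff_snd))))
  · obtain ⟨L, hL⟩ := lipschitz_jkDalt a₀
    refine ⟨L, ?_⟩
    have : (fun p => fderiv ℝ (jkU a₀) p) = jkDalt a₀ := by
      funext p
      rw [fderiv_jkU, jkD_eq_alt]
    rw [this]
    exact hL
  · intro p hp
    have hdet : LinearMap.det ((fderiv ℝ (jkU a₀) p).toLinearMap)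
        = 2 * a₀ * (1 - a₀ ^ 2) * p.2.2 := by
      rw [fderiv_jkU, det_jkD, max_eq_left hp.le]
      ring
    refine ⟨hdet, ?_⟩
    rw [hdet]
    positivity
  · intro p hp
    rw [fderiv_jkU, det_jkD, max_eq_right hp]
    ring
end
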